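/- With the notation below, suppose b_0+b_2 ≢ b_1+b_3 (mod 2) and ββ̄ ≡ −3 (mod 8). Then: (1) if b_0b_2+b_1b_3+c_0c_2+c_1c_3 ≡ 0 (mod 4), then ββ̄·γγ̄ = (8j+1)(8m−3)(8n−3) for some integer j and primes 8m−3, 8n−3 ∈ P with j ≡ m+n (mod 2); (2) if b_0b_2+b_1b_3+c_0c_2+c_1c_3 ≡ 2 (mod 4), then ββ̄·γγ̄ = (8j+1)(8m−3)(8n−3) for some integer j and primes 8m−3, 8n−3 ∈ P with j ≢ m+n (mod 2). -/

import Mathlib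

open Matrix Complex

def Pset : Set ℤ := {p : ℤ | Prime p ∧ 0 < p ∧ p ≡ -3 [ZMOD 8]}

def bI (a : ℕ → ℤ) (i : ℕ) : ℤ := (a i + a (i + 8)) + (a (i + 4) + a (i + 12))

def cI (a : ℕ → ℤ) (i : ℕ) : ℤ := (a i + a (i + 8)) - (a (i + 4) + a (i + 12))

def dd (a : ℕ → ℤ) (i : ℕ) : ℤ := a i - a (i + 8)

noncomputable def alphaD (d : ℕ → ℤ) (i : ℕ) : ℂ := (d i : ℂ) + Complex.I * (d (i + 4) : ℂ)

noncomputable def betaD (d : ℕ → ℤ) : ℂ :=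
  (alphaD d 0 + alphaD d 2) ^ 2 - (alphaD d 1 + alphaD d 3) ^ 2

noncomputable def gammaD (d : ℕ → ℤ) : ℂ :=
  (alphaD d 0 - alphaD d 2) ^ 2 + (alphaD d 1 - alphaD d 3) ^ 2

/-! ### Complex algebra -/

lemma conj_form (X Y : ℤ) : ((X:ℂ) + (Y:ℂ)*Complex.I) * (starRingEnd ℂ) ((X:ℂ) + (Y:ℂ)*Complex.I)
    = ((X^2 + Y^2 : ℤ) : ℂ) := by
  simp only [map_add, _root_.map_mul, Complex.conj_I, map_intCast]
  push_cast
  linear_combination (-(Y:ℂ)^2) * Complex.I_sq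

lemma betaD_eq (d : ℕ → ℤ) : betaD d =
    (((d 0 + d 2)^2 - (d 4 + d 6)^2 - (d 1 + d 3)^2 + (d 5 + d 7)^2 : ℤ) : ℂ)
    + ((2*((d 0 + d 2)*(d 4 + d 6) - (d 1 + d 3)*(d 5 + d 7)) : ℤ) : ℂ) * Complex.I := by
  simp only [betaD, alphaD]
  push_cast
  linear_combination ((d 4 : ℂ) + d 6)^2 * Complex.I_sq - ((d 5 : ℂ) + d 7)^2 * Complex.I_sq

lemma gammaD_eq (d : ℕ → ℤ) : gammaD d =
    (((d 0 - d 2)^2 - (d 4 - d 6)^2 + (d 1 - d 3)^2 - (d 5 - d 7)^2 : ℤ) : ℂ)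
    + ((2*((d 0 - d 2)*(d 4 - d 6) + (d 1 - d 3)*(d 5 - d 7)) : ℤ) : ℂ) * Complex.I := by
  simp only [gammaD, alphaD]
  push_cast
  linear_combination ((d 4 : ℂ) - d 6)^2 * Complex.I_sq + ((d 5 : ℂ) - d 7)^2 * Complex.I_sq

/-! ### Number theory: factor extraction -/

lemma sq_mod8 {p : ℕ} (hp : p % 2 = 1) : p^2 % 8 = 1 := by
  have h := Nat.mul_mod p p 8
  have h8 : p % 8 = 1 ∨ p % 8 = 3 ∨ p % 8 = 5 ∨ p % 8 = 7 := by omega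
  rw [pow_two]
  rcases h8 with h1 | h1 | h1 | h1 <;> rw [h1] at h <;> omega

lemma L1 : ∀ N : ℕ, 0 < N → N % 2 = 1 →
    (∀ q : ℕ, q.Prime → q % 4 = 3 → Even (N.factorization q)) →
    N % 8 = 1 ∨ ∃ p : ℕ, p.Prime ∧ p % 8 = 5 ∧ p ∣ N ∧ (N / p) % 8 = 1 := by
  intro N
  induction N using Nat.strong_induction_on with
  | _ N ih =>
    intro hpos hodd hfac
    rcases eq_or_lt_of_le (Nat.one_le_iff_ne_zero.mpr hpos.ne') with h1 | h1
    · left; omega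
    have hN1 : N ≠ 1 := by omega
    have hp : N.minFac.Prime := Nat.minFac_prime hN1
    have hpdvd : N.minFac ∣ N := Nat.minFac_dvd N
    obtain ⟨p, hpdef⟩ : ∃ p, p = N.minFac := ⟨_, rfl⟩
    rw [← hpdef] at hp hpdvd
    have hp2 : p % 2 = 1 := by
      rcases Nat.Prime.eq_two_or_odd hp with h | h
      · exfalso; have : 2 ∣ N := h ▸ hpdvd; omega
      · exact h
    have hple : 2 ≤ p := hp.two_le
    have hpm4 : p % 4 = 1 ∨ p % 4 = 3 := by omega
    rcases hpm4 with h4 | h4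
    · -- p ≡ 1 mod 4
      obtain ⟨M, hNM⟩ : ∃ M, N = p * M := ⟨N / p, (Nat.mul_div_cancel' hpdvd).symm⟩
      have hNp : N / p = M := by rw [hNM, Nat.mul_div_cancel_left _ (by omega)]
      have hMpos : 0 < M := Nat.pos_of_ne_zero (fun h => by subst h; rw [Nat.mul_zero] at hNM; omega)
      have hModd : M % 2 = 1 := by
        rcases Nat.even_or_odd M with ⟨k, hk⟩ | h
        · exfalso; have : N = 2 * (p * k) := by rw [hNM, hk]; ring
          omega
        · exact Nat.odd_iff.mp h
      have hMlt : M < N := by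
        have := Nat.mul_le_mul_right M hple; omega
      have hMfac : ∀ q : ℕ, q.Prime → q % 4 = 3 → Even (M.factorization q) := by
        intro q hq hq4
        have hqp : q ≠ p := by rintro rfl; omega
        have h := hfac q hq hq4
        rw [← hNp, Nat.factorization_div hpdvd, Finsupp.tsub_apply, hp.factorization,
          Finsupp.single_apply, if_neg (fun h' => hqp h'.symm)]
        simpa using h
      have hp8 : p % 8 = 1 ∨ p % 8 = 5 := by omega
      rcases ih M hMlt hMpos hModd hMfac with hM8 | ⟨p', hp', hp'8, hp'dvd, hq8⟩
      · have hmm := Nat.mul_mod p M 8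
        rcases hp8 with h8 | h8
        · left; rw [h8, hM8] at hmm; omega
        · right
          exact ⟨p, hp, h8, hpdvd, by rw [hNp]; exact hM8⟩
      · have hM : M = p' * (M / p') := (Nat.mul_div_cancel' hp'dvd).symm
        have hMm := Nat.mul_mod p' (M / p') 8
        rw [hp'8, hq8] at hMm
        rcases hp8 with h8 | h8
        · right
          refine ⟨p', hp', hp'8, hp'dvd.trans ⟨p, by rw [hNM]; ring⟩, ?_⟩
          have hdiv : N / p' = p * (M / p') := by rw [hNM, Nat.mul_div_assoc _ hp'dvd]
          have := Nat.mul_mod p (M / p') 8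
          rw [h8] at this
          omega
        · left
          have hmm := Nat.mul_mod p M 8
          rw [h8] at hmm
          omega
    · -- p ≡ 3 mod 4
      have hev := hfac p hp h4
      have hfe : 0 < N.factorization p := hp.factorization_pos_of_dvd hpos.ne' hpdvd
      have hfe2 : 2 ≤ N.factorization p := by
        obtain ⟨k, hk⟩ := hev; omega
      have hp2dvd : p ^ 2 ∣ N := (pow_dvd_pow p hfe2).trans (Nat.ordProj_dvd N p)
      obtain ⟨M, hNM⟩ : ∃ M, N = p ^ 2 * M := ⟨N / p ^ 2, (Nat.mul_div_cancel' hp2dvd).symm⟩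
      have hpsq : p ^ 2 % 8 = 1 := sq_mod8 hp2
      have hp2pos : 0 < p ^ 2 := by positivity
      have hNp : N / p ^ 2 = M := by rw [hNM, Nat.mul_div_cancel_left _ hp2pos]
      have hMpos : 0 < M := Nat.pos_of_ne_zero (fun h => by subst h; rw [Nat.mul_zero] at hNM; omega)
      have hModd : M % 2 = 1 := by
        rcases Nat.even_or_odd M with ⟨k, hk⟩ | h
        · exfalso; have : N = 2 * (p ^ 2 * k) := by rw [hNM, hk]; ring
          omega
        · exact Nat.odd_iff.mp h
      have hMlt : M < N := by
        have h2p : 2 ≤ p ^ 2 := by nlinarith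
        have := Nat.mul_le_mul_right M h2p; omega
      have hMfac : ∀ q : ℕ, q.Prime → q % 4 = 3 → Even (M.factorization q) := by
        intro q hq hq4
        have h := hfac q hq hq4
        rw [← hNp, Nat.factorization_div hp2dvd, Finsupp.tsub_apply, hp.factorization_pow,
          Finsupp.single_apply]
        rcases eq_or_ne p q with rfl | hqp
        · rw [if_pos rfl]
          obtain ⟨k, hk⟩ := h
          exact ⟨k - 1, by omega⟩
        · rw [if_neg hqp]; simpa using h
      rcases ih M hMlt hMpos hModd hMfac with hM8 | ⟨p', hp', hp'8, hp'dvd, hq8⟩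
      · left
        have hmm := Nat.mul_mod (p ^ 2) M 8
        rw [hpsq, hM8] at hmm
        omega
      · right
        refine ⟨p', hp', hp'8, hp'dvd.trans ⟨p ^ 2, by rw [hNM]; ring⟩, ?_⟩
        have hdiv : N / p' = p ^ 2 * (M / p') := by rw [hNM, Nat.mul_div_assoc _ hp'dvd]
        have := Nat.mul_mod (p ^ 2) (M / p') 8
        rw [hpsq, hq8] at this
        omega

lemma L3 (B x y : ℤ) (hB : B = x ^ 2 + y ^ 2) (h8 : B % 8 = 5) :
    ∃ p b : ℤ, Prime p ∧ 0 < p ∧ p % 8 = 5 ∧ 0 < b ∧ b % 8 = 1 ∧ B = p * b := by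
  have hB0 : 0 ≤ x ^ 2 + y ^ 2 := by positivity
  have hBpos : 0 < B := by omega
  obtain ⟨N, hN⟩ : ∃ N : ℕ, (N : ℤ) = B := ⟨B.toNat, Int.toNat_of_nonneg hBpos.le⟩
  have hNsq : N = x.natAbs ^ 2 + y.natAbs ^ 2 := by
    have : ((x.natAbs ^ 2 + y.natAbs ^ 2 : ℕ) : ℤ) = (N : ℤ) := by
      push_cast
      rw [hN, hB, _root_.sq_abs, _root_.sq_abs]
    exact_mod_cast this.symm
  have hN8 : N % 8 = 5 := by omega
  have hNpos : 0 < N := by omega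
  have hNodd : N % 2 = 1 := by omega
  have hfac : ∀ q : ℕ, q.Prime → q % 4 = 3 → Even (N.factorization q) := by
    intro q hq hq4
    rw [Nat.factorization_def N hq]
    by_cases hqN : q ∈ N.primeFactors
    · exact Nat.eq_sq_add_sq_iff.mp ⟨x.natAbs, y.natAbs, hNsq⟩ q hqN hq4
    · have hnd : ¬ q ∣ N := fun h => hqN (Nat.mem_primeFactors.mpr ⟨hq, h, by omega⟩)
      rw [padicValNat.eq_zero_of_not_dvd hnd]; exact Even.zero
  rcases L1 N hNpos hNodd hfac with h | ⟨p, hp, hp8, hpdvd, hq8⟩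
  · omega
  · refine ⟨(p : ℤ), ((N / p : ℕ) : ℤ), Nat.prime_iff_prime_int.mp hp, by exact_mod_cast hp.pos,
      by omega, ?_, by omega, ?_⟩
    · have : 0 < N / p := Nat.div_pos (Nat.le_of_dvd hNpos hpdvd) hp.pos
      exact_mod_cast this
    · rw [← hN]
      exact_mod_cast congrArg (Nat.cast : ℕ → ℤ) (Nat.mul_div_cancel' hpdvd).symm

lemma keyLemma (B G x1 y1 x2 y2 : ℤ) (hB : B = x1 ^ 2 + y1 ^ 2) (hG : G = x2 ^ 2 + y2 ^ 2)
    (hB8 : B % 8 = 5) (hG8 : G % 8 = 5) :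
    ∃ j m n : ℤ, (8 * m - 3) ∈ Pset ∧ (8 * n - 3) ∈ Pset ∧
      ((B * G) % 16 = 9 ↔ (j - (m + n)) % 2 = 0) ∧
      B * G = (8 * j + 1) * (8 * m - 3) * (8 * n - 3) := by
  obtain ⟨p, b', hp, hppos, hp8, hb'pos, hb'8, hpb⟩ := L3 B x1 y1 hB hB8
  obtain ⟨q, g', hq, hqpos, hq8, hg'pos, hg'8, hqg⟩ := L3 G x2 y2 hG hG8
  obtain ⟨m, hm⟩ : ∃ m, p = 8 * m - 3 := ⟨(p + 3) / 8, by omega⟩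
  obtain ⟨n, hn⟩ : ∃ n, q = 8 * n - 3 := ⟨(q + 3) / 8, by omega⟩
  have hbg8 : (b' * g') % 8 = 1 := by
    obtain ⟨s, hs⟩ : ∃ s, b' = 8 * s + 1 := ⟨(b' - 1) / 8, by omega⟩
    obtain ⟨t, ht⟩ : ∃ t, g' = 8 * t + 1 := ⟨(g' - 1) / 8, by omega⟩
    have : b' * g' = 8 * (8 * s * t + s + t) + 1 := by rw [hs, ht]; ring
    omega
  obtain ⟨j, hj⟩ : ∃ j, b' * g' = 8 * j + 1 := ⟨(b' * g' - 1) / 8, by omega⟩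
  have hBGe : B * G = (8 * j + 1) * (8 * m - 3) * (8 * n - 3) := by
    rw [hpb, hqg, hm, hn, ← hj]; ring
  refine ⟨j, m, n, ⟨hm ▸ hp, by omega, by unfold Int.ModEq; omega⟩,
    ⟨hn ▸ hq, by omega, by unfold Int.ModEq; omega⟩, ?_, hBGe⟩
  have hexp : (8 * j + 1) * (8 * m - 3) * (8 * n - 3) =
      9 + 8 * (j + m + n) + 16 * (32 * j * m * n - 12 * j * m - 12 * j * n + 4 * j
        + 4 * m * n - 2 * m - 2 * n) := by ring
  rw [hBGe, hexp]
  constructor <;> intro h <;> omega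

/-! ### Mod 16 residue analysis -/

lemma sqstep {m a b : ℤ} (hm : 2 ∣ m) (h : a ≡ b [ZMOD m]) : a ^ 2 ≡ b ^ 2 [ZMOD 2 * m] := by
  obtain ⟨m', rfl⟩ := hm
  obtain ⟨k, hk⟩ := h.dvd
  have hb : b = a + 2 * m' * k := by omega
  rw [Int.modEq_iff_dvd]
  exact ⟨k * a + m' * k ^ 2, by rw [hb]; ring⟩

def L6 : List (ℤ × ℤ) := [(0,0),(1,0),(2,1),(2,3),(4,0),(5,2)]

def CONCL (s0 p0 s1 p1 s2 p2 s3 p3 : ℤ) : Prop :=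
  ((s0 - s1 - s2 + s3 + 2*(p0 - p1 - p2 + p3))^2 + 4*(s0*s1 + s2*s3)^2) % 8 = 5 →
  ((s0 - s1 + s2 - s3 - 2*(p0 - p1 + p2 - p3))^2 + 4*(s0*s1 + s2*s3)^2) % 8 = 5 ∧
  (((s0 - s1 - s2 + s3 + 2*(p0 - p1 - p2 + p3))^2 + 4*(s0*s1 + s2*s3)^2) *
   ((s0 - s1 + s2 - s3 - 2*(p0 - p1 + p2 - p3))^2 + 4*(s0*s1 + s2*s3)^2)) % 16 =
   (if (p0 + p1 + p2 + p3) % 2 = 0 then 9 else 1)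

instance (s0 p0 s1 p1 s2 p2 s3 p3 : ℤ) : Decidable (CONCL s0 p0 s1 p1 s2 p2 s3 p3) := by
  unfold CONCL; infer_instance

set_option maxHeartbeats 1000000 in
lemma listcore : ∀ q0 ∈ L6, ∀ q1 ∈ L6, ∀ q2 ∈ L6, ∀ q3 ∈ L6,
    CONCL q0.1 q0.2 q1.1 q1.2 q2.1 q2.2 q3.1 q3.2 := by decide

def stOK (s p : ℤ) : Prop :=
  (s=0∧p=0)∨(s=1∧p=0)∨(s=2∧p=1)∨(s=2∧p=3)∨(s=4∧p=0)∨(s=5∧p=2)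

lemma stOK_mem {s p : ℤ} (h : stOK s p) : (s, p) ∈ L6 := by
  rcases h with ⟨rfl,rfl⟩|⟨rfl,rfl⟩|⟨rfl,rfl⟩|⟨rfl,rfl⟩|⟨rfl,rfl⟩|⟨rfl,rfl⟩ <;> decide

lemma pairmem (x y : ℤ) : stOK ((x^2+y^2) % 8) ((x*y) % 4) := by
  obtain ⟨k, r, hk, hr0, hr4⟩ : ∃ k r, x = 4*k + r ∧ 0 ≤ r ∧ r < 4 :=
    ⟨x / 4, x % 4, by omega, by omega, by omega⟩
  obtain ⟨l, s, hl, hs0, hs4⟩ : ∃ l s, y = 4*l + s ∧ 0 ≤ s ∧ s < 4 :=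
    ⟨y / 4, y % 4, by omega, by omega, by omega⟩
  subst hk hl
  have e1 : (4*k + r)^2 + (4*l + s)^2 = r^2 + s^2 + 8*(2*k^2 + k*r + 2*l^2 + l*s) := by ring
  have e2 : (4*k + r)*(4*l + s) = r*s + 4*(4*k*l + k*s + l*r) := by ring
  interval_cases r <;> interval_cases s <;> norm_num at e1 e2 ⊢ <;> unfold stOK <;> omega

/-! ### Main theorem -/

theorem stmt14 (a : ℕ → ℤ) (B G : ℤ)
    (hB : (B : ℂ) = betaD (dd a) * (starRingEnd ℂ) (betaD (dd a)))
    (hG : (G : ℂ) = gammaD (dd a) * (starRingEnd ℂ) (gammaD (dd a)))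
    (h1 : ¬ (bI a 0 + bI a 2 ≡ bI a 1 + bI a 3 [ZMOD 2]))
    (h2 : B ≡ -3 [ZMOD 8]) :
    ((bI a 0 * bI a 2 + bI a 1 * bI a 3 + cI a 0 * cI a 2 + cI a 1 * cI a 3 ≡ 0 [ZMOD 4]) →
      ∃ j m n : ℤ, (8 * m - 3) ∈ Pset ∧ (8 * n - 3) ∈ Pset ∧ j ≡ m + n [ZMOD 2] ∧
        B * G = (8 * j + 1) * (8 * m - 3) * (8 * n - 3)) ∧
    ((bI a 0 * bI a 2 + bI a 1 * bI a 3 + cI a 0 * cI a 2 + cI a 1 * cI a 3 ≡ 2 [ZMOD 4]) →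
      ∃ j m n : ℤ, (8 * m - 3) ∈ Pset ∧ (8 * n - 3) ∈ Pset ∧ ¬ (j ≡ m + n [ZMOD 2]) ∧
        B * G = (8 * j + 1) * (8 * m - 3) * (8 * n - 3)) := by
  obtain ⟨d, hd⟩ : ∃ d, d = dd a := ⟨_, rfl⟩
  rw [← hd] at hB hG
  -- integer forms of B and G
  have hBeq : B = ((d 0 + d 2)^2 - (d 4 + d 6)^2 - (d 1 + d 3)^2 + (d 5 + d 7)^2)^2
      + (2*((d 0 + d 2)*(d 4 + d 6) - (d 1 + d 3)*(d 5 + d 7)))^2 := by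
    have h := hB
    rw [betaD_eq d, conj_form] at h
    exact_mod_cast h
  have hGeq : G = ((d 0 - d 2)^2 - (d 4 - d 6)^2 + (d 1 - d 3)^2 - (d 5 - d 7)^2)^2
      + (2*((d 0 - d 2)*(d 4 - d 6) + (d 1 - d 3)*(d 5 - d 7)))^2 := by
    have h := hG
    rw [gammaD_eq d, conj_form] at h
    exact_mod_cast h
  -- pair invariants
  obtain ⟨S0, hS0⟩ : ∃ t : ℤ, t = (d 0)^2 + (d 2)^2 := ⟨_, rfl⟩
  obtain ⟨S1, hS1⟩ : ∃ t : ℤ, t = (d 4)^2 + (d 6)^2 := ⟨_, rfl⟩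
  obtain ⟨S2, hS2⟩ : ∃ t : ℤ, t = (d 1)^2 + (d 3)^2 := ⟨_, rfl⟩
  obtain ⟨S3, hS3⟩ : ∃ t : ℤ, t = (d 5)^2 + (d 7)^2 := ⟨_, rfl⟩
  obtain ⟨P0, hP0⟩ : ∃ t : ℤ, t = (d 0) * (d 2) := ⟨_, rfl⟩
  obtain ⟨P1, hP1⟩ : ∃ t : ℤ, t = (d 4) * (d 6) := ⟨_, rfl⟩
  obtain ⟨P2, hP2⟩ : ∃ t : ℤ, t = (d 1) * (d 3) := ⟨_, rfl⟩
  obtain ⟨P3, hP3⟩ : ∃ t : ℤ, t = (d 5) * (d 7) := ⟨_, rfl⟩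
  -- residues
  obtain ⟨s0, hs0⟩ : ∃ t : ℤ, t = S0 % 8 := ⟨_, rfl⟩
  obtain ⟨s1, hs1⟩ : ∃ t : ℤ, t = S1 % 8 := ⟨_, rfl⟩
  obtain ⟨s2, hs2⟩ : ∃ t : ℤ, t = S2 % 8 := ⟨_, rfl⟩
  obtain ⟨s3, hs3⟩ : ∃ t : ℤ, t = S3 % 8 := ⟨_, rfl⟩
  obtain ⟨p0, hp0⟩ : ∃ t : ℤ, t = P0 % 4 := ⟨_, rfl⟩
  obtain ⟨p1, hp1⟩ : ∃ t : ℤ, t = P1 % 4 := ⟨_, rfl⟩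
  obtain ⟨p2, hp2⟩ : ∃ t : ℤ, t = P2 % 4 := ⟨_, rfl⟩
  obtain ⟨p3, hp3⟩ : ∃ t : ℤ, t = P3 % 4 := ⟨_, rfl⟩
  -- memberships
  have hm0 : stOK s0 p0 := by
    rw [hs0, hp0, hS0, hP0]; exact pairmem (d 0) (d 2)
  have hm1 : stOK s1 p1 := by
    rw [hs1, hp1, hS1, hP1]; exact pairmem (d 4) (d 6)
  have hm2 : stOK s2 p2 := by
    rw [hs2, hp2, hS2, hP2]; exact pairmem (d 1) (d 3)
  have hm3 : stOK s3 p3 := by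
    rw [hs3, hp3, hS3, hP3]; exact pairmem (d 5) (d 7)
  have hcore : CONCL s0 p0 s1 p1 s2 p2 s3 p3 :=
    listcore (s0, p0) (stOK_mem hm0) (s1, p1) (stOK_mem hm1)
      (s2, p2) (stOK_mem hm2) (s3, p3) (stOK_mem hm3)
  -- bridging congruences
  have hXmod : ((d 0 + d 2)^2 - (d 4 + d 6)^2 - (d 1 + d 3)^2 + (d 5 + d 7)^2)
      ≡ (s0 - s1 - s2 + s3 + 2*(p0 - p1 - p2 + p3)) [ZMOD 8] := by
    have hlin : ((d 0 + d 2)^2 - (d 4 + d 6)^2 - (d 1 + d 3)^2 + (d 5 + d 7)^2)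
        = S0 - S1 - S2 + S3 + 2*(P0 - P1 - P2 + P3) := by
      rw [hS0, hS1, hS2, hS3, hP0, hP1, hP2, hP3]; ring
    rw [hlin]
    unfold Int.ModEq
    omega
  have hZmod : ((d 0 - d 2)^2 - (d 4 - d 6)^2 + (d 1 - d 3)^2 - (d 5 - d 7)^2)
      ≡ (s0 - s1 + s2 - s3 - 2*(p0 - p1 + p2 - p3)) [ZMOD 8] := by
    have hlin : ((d 0 - d 2)^2 - (d 4 - d 6)^2 + (d 1 - d 3)^2 - (d 5 - d 7)^2)
        = S0 - S1 + S2 - S3 - 2*(P0 - P1 + P2 - P3) := by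
      rw [hS0, hS1, hS2, hS3, hP0, hP1, hP2, hP3]; ring
    rw [hlin]
    unfold Int.ModEq
    omega
  -- sums/differences are ≡ S_i mod 2
  have hadd : ∀ i j : ℕ, ∀ S : ℤ, S = (d i)^2 + (d j)^2 → (d i + d j ≡ S [ZMOD 2]) := by
    intro i j S hS
    obtain ⟨e1, he1⟩ := Int.even_mul_succ_self (d i - 1)
    obtain ⟨e2, he2⟩ := Int.even_mul_succ_self (d j - 1)
    rw [Int.modEq_iff_dvd]
    exact ⟨e1 + e2, by rw [hS]; linear_combination he1 + he2⟩
  have hsub : ∀ i j : ℕ, ∀ S : ℤ, S = (d i)^2 + (d j)^2 → (d i - d j ≡ S [ZMOD 2]) := by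
    intro i j S hS
    obtain ⟨e1, he1⟩ := Int.even_mul_succ_self (d i - 1)
    obtain ⟨e2, he2⟩ := Int.even_mul_succ_self (d j)
    rw [Int.modEq_iff_dvd]
    exact ⟨e1 + e2, by rw [hS]; linear_combination he1 + he2⟩
  have hS0s : S0 ≡ s0 [ZMOD 2] := by unfold Int.ModEq; omega
  have hS1s : S1 ≡ s1 [ZMOD 2] := by unfold Int.ModEq; omega
  have hS2s : S2 ≡ s2 [ZMOD 2] := by unfold Int.ModEq; omega
  have hS3s : S3 ≡ s3 [ZMOD 2] := by unfold Int.ModEq; omega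
  have hflip : s0*s1 - s2*s3 ≡ s0*s1 + s2*s3 [ZMOD 2] :=
    Int.modEq_iff_dvd.mpr ⟨s2*s3, by ring⟩
  have hYmod : ((d 0 + d 2)*(d 4 + d 6) - (d 1 + d 3)*(d 5 + d 7))
      ≡ (s0*s1 + s2*s3) [ZMOD 2] := by
    have h := ((((hadd 0 2 S0 hS0).trans hS0s).mul ((hadd 4 6 S1 hS1).trans hS1s)).sub
      (((hadd 1 3 S2 hS2).trans hS2s).mul ((hadd 5 7 S3 hS3).trans hS3s)))
    exact h.trans hflip
  have hWmod : ((d 0 - d 2)*(d 4 - d 6) + (d 1 - d 3)*(d 5 - d 7))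
      ≡ (s0*s1 + s2*s3) [ZMOD 2] :=
    (((hsub 0 2 S0 hS0).trans hS0s).mul ((hsub 4 6 S1 hS1).trans hS1s)).add
      (((hsub 1 3 S2 hS2).trans hS2s).mul ((hsub 5 7 S3 hS3).trans hS3s))
  -- B and G mod 16
  have hB16 : B ≡ ((s0 - s1 - s2 + s3 + 2*(p0 - p1 - p2 + p3))^2
      + 4*(s0*s1 + s2*s3)^2) [ZMOD 16] := by
    have hB' : B = ((d 0 + d 2)^2 - (d 4 + d 6)^2 - (d 1 + d 3)^2 + (d 5 + d 7)^2)^2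
        + 4*((d 0 + d 2)*(d 4 + d 6) - (d 1 + d 3)*(d 5 + d 7))^2 := by rw [hBeq]; ring
    have hx : ((d 0 + d 2)^2 - (d 4 + d 6)^2 - (d 1 + d 3)^2 + (d 5 + d 7)^2)^2
        ≡ (s0 - s1 - s2 + s3 + 2*(p0 - p1 - p2 + p3))^2 [ZMOD 16] := by
      simpa using sqstep (by norm_num) hXmod
    have hy : 4*((d 0 + d 2)*(d 4 + d 6) - (d 1 + d 3)*(d 5 + d 7))^2
        ≡ 4*(s0*s1 + s2*s3)^2 [ZMOD 16] := by
      simpa using (sqstep (by norm_num) hYmod).mul_left' (c := 4)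
    rw [hB']
    exact hx.add hy
  have hG16 : G ≡ ((s0 - s1 + s2 - s3 - 2*(p0 - p1 + p2 - p3))^2
      + 4*(s0*s1 + s2*s3)^2) [ZMOD 16] := by
    have hG' : G = ((d 0 - d 2)^2 - (d 4 - d 6)^2 + (d 1 - d 3)^2 - (d 5 - d 7)^2)^2
        + 4*((d 0 - d 2)*(d 4 - d 6) + (d 1 - d 3)*(d 5 - d 7))^2 := by rw [hGeq]; ring
    have hx : ((d 0 - d 2)^2 - (d 4 - d 6)^2 + (d 1 - d 3)^2 - (d 5 - d 7)^2)^2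
        ≡ (s0 - s1 + s2 - s3 - 2*(p0 - p1 + p2 - p3))^2 [ZMOD 16] := by
      simpa using sqstep (by norm_num) hZmod
    have hw : 4*((d 0 - d 2)*(d 4 - d 6) + (d 1 - d 3)*(d 5 - d 7))^2
        ≡ 4*(s0*s1 + s2*s3)^2 [ZMOD 16] := by
      simpa using (sqstep (by norm_num) hWmod).mul_left' (c := 4)
    rw [hG']
    exact hx.add hw
  -- numeric consequences
  have hB8 : B % 8 = 5 := by
    have h := h2; unfold Int.ModEq at h; omega
  have hBres8 : ((s0 - s1 - s2 + s3 + 2*(p0 - p1 - p2 + p3))^2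
      + 4*(s0*s1 + s2*s3)^2) % 8 = 5 := by
    have h := hB16; unfold Int.ModEq at h; omega
  obtain ⟨hGres8, hprod16⟩ := hcore hBres8
  have hG8 : G % 8 = 5 := by
    have h := hG16; unfold Int.ModEq at h; omega
  have hBGmod : (B * G) % 16 = (if (p0 + p1 + p2 + p3) % 2 = 0 then 9 else 1) := by
    have h := hB16.mul hG16
    unfold Int.ModEq at h
    omega
  -- bI/cI identity
  have hS : bI a 0 * bI a 2 + bI a 1 * bI a 3 + cI a 0 * cI a 2 + cI a 1 * cI a 3
      = 2*(P0 + P1 + P2 + P3)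
        + 4*(a 0 * a 10 + a 8 * a 2 + a 4 * a 14 + a 12 * a 6
          + a 1 * a 11 + a 9 * a 3 + a 5 * a 15 + a 13 * a 7) := by
    rw [hP0, hP1, hP2, hP3, hd]
    simp only [bI, cI, dd]
    norm_num
    ring
  -- key lemma application
  obtain ⟨j, m, n, hmP, hnP, hiff, hprodF⟩ := keyLemma B G _ _ _ _ hBeq hGeq hB8 hG8
  constructor
  · intro hS0'
    unfold Int.ModEq at hS0'
    refine ⟨j, m, n, hmP, hnP, ?_, hprodF⟩
    have hT2 : (p0 + p1 + p2 + p3) % 2 = 0 := by omega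
    rw [if_pos hT2] at hBGmod
    have := hiff.mp hBGmod
    unfold Int.ModEq
    omega
  · intro hS2'
    unfold Int.ModEq at hS2'
    refine ⟨j, m, n, hmP, hnP, ?_, hprodF⟩
    have hT2 : ¬ (p0 + p1 + p2 + p3) % 2 = 0 := by omega
    rw [if_neg hT2] at hBGmod
    intro hc
    unfold Int.ModEq at hc
    have h9 := hiff.mpr (by omega)
    omega
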